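/- arXiv:1512.01710 — 4 statements merged into one kernel-verified Lean document; each statement's English description precedes it below -/
import Mathlib

section
/- The map X : ℝ² → ℝ², X(a₁,a₂) = (X₁(a₁,a₂), X₂(a₁,a₂)), is differentiable, and for every (a₁,a₂) ∈ ℝ² the absolute value of the determinant of its Jacobian matrix at (a₁,a₂) equals 2π²·|S_ρ(a₁,a₂)|, where |·| denotes the complex absolute value. -/
open Real

noncomputable section

/-- `X₁` for `A₂`. -/
def X1 (a : ℝ × ℝ) : ℝ :=
  Real.cos (2 * π * a.1) + Real.cos (2 * π * a.2) + Real.cos (2 * π * (a.1 - a.2))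

/-- `X₂` for `A₂`. -/
def X2 (a : ℝ × ℝ) : ℝ :=
  Real.sin (2 * π * a.1) - Real.sin (2 * π * a.2) - Real.sin (2 * π * (a.1 - a.2))

/-- The `X`-transform of `A₂`. -/
def Xmap (a : ℝ × ℝ) : ℝ × ℝ := (X1 a, X2 a)

/-- The lowest antisymmetric orbit function `S_ρ` of `A₂`. -/
def Srho (a : ℝ × ℝ) : ℂ :=
  Complex.exp (2 * π * Complex.I * (a.1 + a.2)) -
  Complex.exp (2 * π * Complex.I * (-a.1 + 2 * a.2)) -
  Complex.exp (2 * π * Complex.I * (2 * a.1 - a.2)) +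
  Complex.exp (2 * π * Complex.I * (a.1 - 2 * a.2)) +
  Complex.exp (2 * π * Complex.I * (-2 * a.1 + a.2)) -
  Complex.exp (2 * π * Complex.I * (-a.1 - a.2))

/-- A continuous linear map `(ℝ×ℝ) → (ℝ×ℝ)` given by a 2×2 matrix. -/
def mk2 (p q r s : ℝ) : (ℝ × ℝ) →L[ℝ] (ℝ × ℝ) :=
  (p • ContinuousLinearMap.fst ℝ ℝ ℝ + q • ContinuousLinearMap.snd ℝ ℝ ℝ).prod
  (r • ContinuousLinearMap.fst ℝ ℝ ℝ + s • ContinuousLinearMap.snd ℝ ℝ ℝ)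

lemma mk2_det (p q r s : ℝ) : (mk2 p q r s).det = p * s - q * r := by
  have h : (mk2 p q r s).det = LinearMap.det ((mk2 p q r s) : (ℝ×ℝ) →ₗ[ℝ] (ℝ×ℝ)) := rfl
  rw [h, ← LinearMap.det_toMatrix (Module.Basis.finTwoProd ℝ), Matrix.det_fin_two]
  simp [LinearMap.toMatrix_apply, mk2]

lemma hXderiv (a : ℝ × ℝ) : HasFDerivAt Xmap
    (mk2 (-(2*π) * Real.sin (2*π*a.1) - (2*π) * Real.sin (2*π*(a.1-a.2)))
         (-(2*π) * Real.sin (2*π*a.2) + (2*π) * Real.sin (2*π*(a.1-a.2)))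
         ((2*π) * Real.cos (2*π*a.1) - (2*π) * Real.cos (2*π*(a.1-a.2)))
         (-(2*π) * Real.cos (2*π*a.2) + (2*π) * Real.cos (2*π*(a.1-a.2)))) a := by
  have h1 : HasFDerivAt (fun b : ℝ×ℝ => 2*π*b.1) ((2*π) • ContinuousLinearMap.fst ℝ ℝ ℝ) a :=
    (hasFDerivAt_fst.const_mul (2*π))
  have h2 : HasFDerivAt (fun b : ℝ×ℝ => 2*π*b.2) ((2*π) • ContinuousLinearMap.snd ℝ ℝ ℝ) a :=
    (hasFDerivAt_snd.const_mul (2*π))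
  have h3 : HasFDerivAt (fun b : ℝ×ℝ => 2*π*(b.1-b.2))
      ((2*π) • (ContinuousLinearMap.fst ℝ ℝ ℝ - ContinuousLinearMap.snd ℝ ℝ ℝ)) a :=
    ((hasFDerivAt_fst.sub hasFDerivAt_snd).const_mul (2*π))
  have c1 := (Real.hasDerivAt_cos (2*π*a.1)).comp_hasFDerivAt a h1
  have c2 := (Real.hasDerivAt_cos (2*π*a.2)).comp_hasFDerivAt a h2
  have c3 := (Real.hasDerivAt_cos (2*π*(a.1-a.2))).comp_hasFDerivAt a h3
  have s1 := (Real.hasDerivAt_sin (2*π*a.1)).comp_hasFDerivAt a h1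
  have s2 := (Real.hasDerivAt_sin (2*π*a.2)).comp_hasFDerivAt a h2
  have s3 := (Real.hasDerivAt_sin (2*π*(a.1-a.2))).comp_hasFDerivAt a h3
  have hX : HasFDerivAt Xmap (((-Real.sin (2*π*a.1)) • ((2*π) • ContinuousLinearMap.fst ℝ ℝ ℝ) +
      (-Real.sin (2*π*a.2)) • ((2*π) • ContinuousLinearMap.snd ℝ ℝ ℝ) +
      (-Real.sin (2*π*(a.1-a.2))) • ((2*π) • (ContinuousLinearMap.fst ℝ ℝ ℝ - ContinuousLinearMap.snd ℝ ℝ ℝ))).prod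
      ((Real.cos (2*π*a.1)) • ((2*π) • ContinuousLinearMap.fst ℝ ℝ ℝ) -
      (Real.cos (2*π*a.2)) • ((2*π) • ContinuousLinearMap.snd ℝ ℝ ℝ) -
      (Real.cos (2*π*(a.1-a.2))) • ((2*π) • (ContinuousLinearMap.fst ℝ ℝ ℝ - ContinuousLinearMap.snd ℝ ℝ ℝ)))) a :=
    HasFDerivAt.prodMk ((c1.add c2).add c3) ((s1.sub s2).sub s3)
  convert hX using 1
  ext <;> simp [mk2] <;> ring

lemma srho_eq (a : ℝ × ℝ) : Srho a =
    (2 * (Real.sin (2*π*(a.1+a.2)) + Real.sin (2*π*(a.1-2*a.2)) - Real.sin (2*π*(2*a.1-a.2))) : ℝ) * Complex.I := by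
  have key : ∀ x : ℝ, Complex.exp (2 * π * Complex.I * x) =
      (Real.cos (2*π*x) : ℝ) + (Real.sin (2*π*x) : ℝ) * Complex.I := by
    intro x
    rw [show (2 * (π:ℂ) * Complex.I * x) = ((2*π*x : ℝ) : ℂ) * Complex.I by push_cast; ring,
      Complex.exp_mul_I]
    push_cast [Complex.ofReal_cos, Complex.ofReal_sin]
    simp
  simp only [Srho]
  rw [show (2 * (π:ℂ) * Complex.I * ((a.1:ℂ) + a.2)) = 2 * π * Complex.I * ((a.1+a.2:ℝ):ℂ) by push_cast; ring,
    show (2 * (π:ℂ) * Complex.I * (-(a.1:ℂ) + 2*a.2)) = 2 * π * Complex.I * ((-a.1+2*a.2:ℝ):ℂ) by push_cast; ring,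
    show (2 * (π:ℂ) * Complex.I * (2*(a.1:ℂ) - a.2)) = 2 * π * Complex.I * ((2*a.1-a.2:ℝ):ℂ) by push_cast; ring,
    show (2 * (π:ℂ) * Complex.I * ((a.1:ℂ) - 2*a.2)) = 2 * π * Complex.I * ((a.1-2*a.2:ℝ):ℂ) by push_cast; ring,
    show (2 * (π:ℂ) * Complex.I * (-2*(a.1:ℂ) + a.2)) = 2 * π * Complex.I * ((-2*a.1+a.2:ℝ):ℂ) by push_cast; ring,
    show (2 * (π:ℂ) * Complex.I * (-(a.1:ℂ) - a.2)) = 2 * π * Complex.I * ((-a.1-a.2:ℝ):ℂ) by push_cast; ring]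
  rw [key, key, key, key, key, key]
  have hc : ∀ x : ℝ, Real.cos (2*π*(-x)) = Real.cos (2*π*x) := by
    intro x; rw [show 2*π*(-x) = -(2*π*x) by ring, Real.cos_neg]
  have hs : ∀ x : ℝ, Real.sin (2*π*(-x)) = -Real.sin (2*π*x) := by
    intro x; rw [show 2*π*(-x) = -(2*π*x) by ring, Real.sin_neg]
  have k1 : Real.cos (2*π*(-a.1-a.2)) = Real.cos (2*π*(a.1+a.2)) := by
    rw [show -a.1-a.2 = -(a.1+a.2) by ring, hc]
  have k2 : Real.cos (2*π*(-a.1+2*a.2)) = Real.cos (2*π*(a.1-2*a.2)) := by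
    rw [show -a.1+2*a.2 = -(a.1-2*a.2) by ring, hc]
  have k3 : Real.cos (2*π*(-2*a.1+a.2)) = Real.cos (2*π*(2*a.1-a.2)) := by
    rw [show -2*a.1+a.2 = -(2*a.1-a.2) by ring, hc]
  have k4 : Real.sin (2*π*(-a.1-a.2)) = -Real.sin (2*π*(a.1+a.2)) := by
    rw [show -a.1-a.2 = -(a.1+a.2) by ring, hs]
  have k5 : Real.sin (2*π*(-a.1+2*a.2)) = -Real.sin (2*π*(a.1-2*a.2)) := by
    rw [show -a.1+2*a.2 = -(a.1-2*a.2) by ring, hs]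
  have k6 : Real.sin (2*π*(-2*a.1+a.2)) = -Real.sin (2*π*(2*a.1-a.2)) := by
    rw [show -2*a.1+a.2 = -(2*a.1-a.2) by ring, hs]
  rw [k1, k2, k3, k4, k5, k6]
  push_cast
  ring

lemma srho_abs (a : ℝ × ℝ) : ‖Srho a‖ =
    2 * |Real.sin (2*π*(a.1+a.2)) + Real.sin (2*π*(a.1-2*a.2)) - Real.sin (2*π*(2*a.1-a.2))| := by
  rw [srho_eq, norm_mul, Complex.norm_I, mul_one, Complex.norm_real, Real.norm_eq_abs, abs_mul]
  norm_num

/-- The `X`-transform of `A₂` is differentiable and the absolute value of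
its Jacobian determinant equals `2π²·|S_ρ|`. -/
theorem jacobian_A2 :
    Differentiable ℝ Xmap ∧
    ∀ a : ℝ × ℝ, |(fderiv ℝ Xmap a).det| = 2 * π ^ 2 * ‖Srho a‖ := by
  constructor
  · exact fun a => (hXderiv a).differentiableAt
  · intro a
    rw [(hXderiv a).fderiv, mk2_det, srho_abs]
    set S := Real.sin (2*π*(a.1+a.2)) + Real.sin (2*π*(a.1-2*a.2)) - Real.sin (2*π*(2*a.1-a.2))
      with hS
    have key : (-(2*π) * Real.sin (2*π*a.1) - (2*π) * Real.sin (2*π*(a.1-a.2))) *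
        (-(2*π) * Real.cos (2*π*a.2) + (2*π) * Real.cos (2*π*(a.1-a.2))) -
        (-(2*π) * Real.sin (2*π*a.2) + (2*π) * Real.sin (2*π*(a.1-a.2))) *
        ((2*π) * Real.cos (2*π*a.1) - (2*π) * Real.cos (2*π*(a.1-a.2))) = (2*π)^2 * S := by
    -- express everything through sin/cos of u = 2πa₁, v = 2πa₂, w = 2π(a₁-a₂)
      rw [hS, show 2*π*(a.1+a.2) = 2*π*a.1 + 2*π*a.2 by ring,
        show 2*π*(a.1-2*a.2) = 2*π*(a.1-a.2) - 2*π*a.2 by ring,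
        show 2*π*(2*a.1-a.2) = 2*π*(a.1-a.2) + 2*π*a.1 by ring,
        Real.sin_add, Real.sin_sub, Real.sin_add]
      ring
    rw [key, abs_mul, abs_of_nonneg (by positivity : (0:ℝ) ≤ (2*π)^2)]
    ring
end
end

section
/- For every integer M ≥ 1, the node map of A₂ is injective: for any two distinct triples j = (s₀,s₁,s₂) and j' = (s₀',s₁',s₂') in I_M, the points y^{(j)} and y^{(j')} of ℝ² are distinct. Consequently the set of nodes Ω_M = {y^{(j)} : j ∈ I_M} has exactly |I_M| elements. -/
open Real

noncomputable section

/-- The index set `I_M` of `A₂`. -/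
def IM (M : ℕ) : Finset (ℕ × ℕ × ℕ) :=
  (Finset.range (M + 1) ×ˢ Finset.range (M + 1) ×ˢ Finset.range (M + 1)).filter
    (fun j => j.1 + j.2.1 + j.2.2 = M)

/-- The node `y^{(j)} = X(a^{(j)})` of `A₂`. -/
def node (M : ℕ) (j : ℕ × ℕ × ℕ) : ℝ × ℝ :=
  Xmap (((2 * j.2.1 + j.2.2 : ℕ) : ℝ) / (3 * M), ((j.2.1 + 2 * j.2.2 : ℕ) : ℝ) / (3 * M))

/- ### Auxiliary machinery -/

/-- The root-of-unity exponential `e^{2πik/(3M)}`. -/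
def EE (M : ℕ) (k : ℤ) : ℂ := Complex.exp (2 * Real.pi * Complex.I * k / (3 * M))

lemma EE_add (M : ℕ) (k l : ℤ) : EE M (k + l) = EE M k * EE M l := by
  rw [EE, EE, EE, ← Complex.exp_add]
  congr 1
  push_cast
  ring

lemma EE_zero (M : ℕ) : EE M 0 = 1 := by simp [EE]

lemma EE_ne_zero (M : ℕ) (k : ℤ) : EE M k ≠ 0 := Complex.exp_ne_zero _

lemma EE_eq_one_iff (M : ℕ) (hM : 1 ≤ M) (k : ℤ) : EE M k = 1 ↔ (3 * (M:ℤ)) ∣ k := by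
  rw [EE, Complex.exp_eq_one_iff]
  have hpi : (Real.pi : ℂ) ≠ 0 := Complex.ofReal_ne_zero.mpr Real.pi_ne_zero
  have hI : Complex.I ≠ 0 := Complex.I_ne_zero
  have hMne : ((M:ℂ)) ≠ 0 := Nat.cast_ne_zero.mpr (by omega)
  constructor
  · rintro ⟨n, hn⟩
    refine ⟨n, ?_⟩
    field_simp at hn
    have h2 : (k:ℂ) = ((3 * (M:ℤ) * n : ℤ) : ℂ) := by
      push_cast
      exact mul_left_cancel₀ (mul_ne_zero (mul_ne_zero two_ne_zero hpi) hI)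
        (b := (k:ℂ)) (c := 3 * (M:ℂ) * n) (by linear_combination (2 * (Real.pi:ℂ) * Complex.I) * hn)
    exact_mod_cast h2
  · rintro ⟨n, rfl⟩
    refine ⟨n, ?_⟩
    field_simp
    push_cast
    ring

lemma EE_eq_iff (M : ℕ) (hM : 1 ≤ M) (k l : ℤ) :
    EE M k = EE M l ↔ (3 * (M:ℤ)) ∣ (k - l) := by
  rw [← EE_eq_one_iff M hM]
  constructor
  · intro h
    have h1 : EE M (k - l) * EE M l = EE M k := by rw [← EE_add]; congr 1; ring
    have h2 : EE M (k - l) * EE M l = 1 * EE M l := by rw [h1, h, one_mul]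
    exact mul_right_cancel₀ (EE_ne_zero M l) h2
  · intro h
    have h1 : EE M k = EE M (k - l) * EE M l := by rw [← EE_add]; congr 1; ring
    rw [h1, h, one_mul]

lemma EE_conj (M : ℕ) (k : ℤ) : (starRingEnd ℂ) (EE M k) = EE M (-k) := by
  rw [EE, EE, ← Complex.exp_conj]
  congr 1
  simp [map_div₀, Complex.conj_I, map_ofNat]

lemma EE_sym2 (M : ℕ) (P Q R : ℤ) (h : P + Q + R = 0) :
    EE M P * EE M Q + EE M P * EE M R + EE M Q * EE M R
      = EE M (-P) + EE M (-Q) + EE M (-R) := by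
  rw [← EE_add, ← EE_add, ← EE_add, show P + Q = -R by omega, show P + R = -Q by omega,
    show Q + R = -P by omega]
  ring

lemma EE_sym3 (M : ℕ) (P Q R : ℤ) (h : P + Q + R = 0) : EE M P * EE M Q * EE M R = 1 := by
  rw [← EE_add, ← EE_add, h, EE_zero]

lemma ms2 {a b d e : ℂ} (h : ({a,b} : Multiset ℂ) = {d,e}) :
    (a = d ∧ b = e) ∨ (a = e ∧ b = d) := by
  have ha : a ∈ ({d,e} : Multiset ℂ) := h ▸ (by simp)
  simp only [Multiset.insert_eq_cons, Multiset.mem_cons, Multiset.mem_singleton] at ha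
  rcases ha with h1 | h1
  · left
    refine ⟨h1, ?_⟩
    rw [h1] at h
    simpa using (Multiset.cons_inj_right d).mp h
  · right
    refine ⟨h1, ?_⟩
    rw [h1, show ({d,e} : Multiset ℂ) = {e,d} from Multiset.cons_swap _ _ _] at h
    simpa using (Multiset.cons_inj_right e).mp h

lemma ms3 {a b c d e f : ℂ} (h : ({a,b,c} : Multiset ℂ) = {d,e,f}) :
    (a = d ∧ ((b = e ∧ c = f) ∨ (b = f ∧ c = e))) ∨
    (a = e ∧ ((b = d ∧ c = f) ∨ (b = f ∧ c = d))) ∨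
    (a = f ∧ ((b = d ∧ c = e) ∨ (b = e ∧ c = d))) := by
  have ha : a ∈ ({d,e,f} : Multiset ℂ) := h ▸ (by simp)
  simp only [Multiset.insert_eq_cons, Multiset.mem_cons, Multiset.mem_singleton] at ha
  rcases ha with h1 | h1 | h1
  · left
    rw [h1] at h
    exact ⟨h1, ms2 ((Multiset.cons_inj_right d).mp h)⟩
  · right; left
    rw [h1, show ({d,e,f} : Multiset ℂ) = e ::ₘ {d,f} from Multiset.cons_swap _ _ _] at h
    exact ⟨h1, ms2 ((Multiset.cons_inj_right e).mp h)⟩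
  · right; right
    rw [h1, show ({d,e,f} : Multiset ℂ) = ({d,f,e} : Multiset ℂ) from
          congrArg (d ::ₘ ·) (Multiset.cons_swap _ _ _),
        show ({d,f,e} : Multiset ℂ) = f ::ₘ {d,e} from Multiset.cons_swap _ _ _] at h
    exact ⟨h1, ms2 ((Multiset.cons_inj_right f).mp h)⟩

open Polynomial in
lemma cubic_expand (u v w : ℂ) : (X - C u) * (X - C v) * (X - C w) =
    X^3 - C (u + v + w) * X^2 + C (u*v + u*w + v*w) * X - C (u*v*w) := by
  simp only [map_add, map_mul]
  ring

open Polynomial in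
lemma roots_three (u v w : ℂ) :
    ((X - C u) * (X - C v) * (X - C w)).roots = {u, v, w} := by
  rw [roots_mul (mul_ne_zero (mul_ne_zero (X_sub_C_ne_zero u) (X_sub_C_ne_zero v))
        (X_sub_C_ne_zero w)),
      roots_mul (mul_ne_zero (X_sub_C_ne_zero u) (X_sub_C_ne_zero v)),
      roots_X_sub_C, roots_X_sub_C, roots_X_sub_C]
  rfl

lemma sym_to_multiset {u v w u' v' w' : ℂ} (h1 : u + v + w = u' + v' + w')
    (h2 : u*v + u*w + v*w = u'*v' + u'*w' + v'*w') (h3 : u*v*w = u'*v'*w') :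
    ({u,v,w} : Multiset ℂ) = {u',v',w'} := by
  rw [← roots_three u v w, ← roots_three u' v' w', cubic_expand, cubic_expand, h1, h2, h3]

lemma node_complex (M s1 s2 : ℕ) :
    EE M (2*(s1:ℤ)+(s2:ℤ)) + EE M (-((s1:ℤ)+2*(s2:ℤ))) + EE M ((s2:ℤ)-(s1:ℤ)) =
    Complex.ofReal ((node M (0,s1,s2)).1) + Complex.ofReal ((node M (0,s1,s2)).2) * Complex.I := by
  set a1 : ℝ := ((2 * s1 + s2 : ℕ) : ℝ) / (3 * M)
  set a2 : ℝ := ((s1 + 2 * s2 : ℕ) : ℝ) / (3 * M)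
  have e1 : EE M (2*(s1:ℤ)+(s2:ℤ)) = Complex.exp ((2*π*a1 : ℝ) * Complex.I) := by
    rw [EE]; congr 1
    show _ = ((2*π*(((2 * s1 + s2 : ℕ) : ℝ) / (3 * M)) : ℝ) : ℂ) * _
    push_cast; ring
  have e2 : EE M (-((s1:ℤ)+2*(s2:ℤ))) = Complex.exp ((-(2*π*a2) : ℝ) * Complex.I) := by
    rw [EE]; congr 1
    show _ = ((-(2*π*(((s1 + 2 * s2 : ℕ) : ℝ) / (3 * M))) : ℝ) : ℂ) * _
    push_cast; ring
  have e3 : EE M ((s2:ℤ)-(s1:ℤ)) = Complex.exp ((-(2*π*(a1-a2)) : ℝ) * Complex.I) := by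
    rw [EE]; congr 1
    show _ = ((-(2*π*((((2 * s1 + s2 : ℕ) : ℝ) / (3 * M)) - (((s1 + 2 * s2 : ℕ) : ℝ) / (3 * M)))) : ℝ) : ℂ) * _
    push_cast; ring
  rw [e1, e2, e3]
  show _ = Complex.ofReal (X1 (a1, a2)) + Complex.ofReal (X2 (a1, a2)) * Complex.I
  rw [X1, X2]
  apply Complex.ext
  · simp only [Complex.add_re, Complex.mul_re, Complex.ofReal_re, Complex.ofReal_im,
      Complex.I_re, Complex.I_im, Complex.exp_ofReal_mul_I_re]
    rw [Real.cos_neg, Real.cos_neg]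
    ring
  · simp only [Complex.add_im, Complex.mul_im, Complex.ofReal_re, Complex.ofReal_im,
      Complex.I_re, Complex.I_im, Complex.exp_ofReal_mul_I_im]
    rw [Real.sin_neg, Real.sin_neg]
    ring

lemma dvd_cases (M : ℤ) (hM : 1 ≤ M) (d : ℤ) (hd : 3*M ∣ d) (h1 : -5*M < d) (h2 : d < 5*M) :
    d = -3*M ∨ d = 0 ∨ d = 3*M := by
  obtain ⟨c, rfl⟩ := hd
  have hc1 : c < 2 := by nlinarith
  have hc2 : -2 < c := by nlinarith
  interval_cases c <;> omega

lemma key_inj (M : ℕ) (hM : 1 ≤ M) (s0 s1 s2 t0 t1 t2 : ℕ)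
    (hs : s0 + s1 + s2 = M) (ht : t0 + t1 + t2 = M)
    (h : node M (s0,s1,s2) = node M (t0,t1,t2)) : (s0,s1,s2) = (t0,t1,t2) := by
  have h0 : node M (0,s1,s2) = node M (0,t1,t2) := h
  have hMZ : (1:ℤ) ≤ (M:ℤ) := by exact_mod_cast hM
  have hC : EE M (2*(s1:ℤ)+(s2:ℤ)) + EE M (-((s1:ℤ)+2*(s2:ℤ))) + EE M ((s2:ℤ)-(s1:ℤ))
      = EE M (2*(t1:ℤ)+(t2:ℤ)) + EE M (-((t1:ℤ)+2*(t2:ℤ))) + EE M ((t2:ℤ)-(t1:ℤ)) := by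
    rw [node_complex, node_complex, h0]
  have hCc := congrArg (starRingEnd ℂ) hC
  simp only [map_add, EE_conj] at hCc
  have hsum : (2*(s1:ℤ)+(s2:ℤ)) + (-((s1:ℤ)+2*(s2:ℤ))) + ((s2:ℤ)-(s1:ℤ)) = 0 := by ring
  have htum : (2*(t1:ℤ)+(t2:ℤ)) + (-((t1:ℤ)+2*(t2:ℤ))) + ((t2:ℤ)-(t1:ℤ)) = 0 := by ring
  have hms := sym_to_multiset hC
    (by rw [EE_sym2 M _ _ _ hsum, EE_sym2 M _ _ _ htum]; exact hCc)
    (by rw [EE_sym3 M _ _ _ hsum, EE_sym3 M _ _ _ htum])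
  have dc : ∀ k l : ℤ, EE M k = EE M l → -5*(M:ℤ) < k - l → k - l < 5*(M:ℤ) →
      (k - l = -3*(M:ℤ) ∨ k - l = 0 ∨ k - l = 3*(M:ℤ)) := fun k l hkl b1 b2 =>
    dvd_cases (M:ℤ) hMZ (k - l) ((EE_eq_iff M hM k l).mp hkl) b1 b2
  have goal : s0 = t0 ∧ s1 = t1 ∧ s2 = t2 := by
    rcases ms3 hms with ⟨hA, ⟨hB, hCq⟩ | ⟨hB, hCq⟩⟩ | ⟨hA, ⟨hB, hCq⟩ | ⟨hB, hCq⟩⟩ |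
      ⟨hA, ⟨hB, hCq⟩ | ⟨hB, hCq⟩⟩ <;>
    (have c1 := dc _ _ hA (by omega) (by omega)
     have c2 := dc _ _ hB (by omega) (by omega)
     have c3 := dc _ _ hCq (by omega) (by omega)
     omega)
  simp [goal.1, goal.2.1, goal.2.2]

/-- The node map of `A₂` is injective on `I_M`; consequently the set of
nodes `Ω_M` has exactly `|I_M|` elements. -/
theorem node_map_injective (M : ℕ) (hM : 1 ≤ M) :
    (∀ j ∈ IM M, ∀ j' ∈ IM M, j ≠ j' → node M j ≠ node M j') ∧
    ((IM M).image (node M)).card = (IM M).card := by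
  have inj : ∀ j ∈ IM M, ∀ j' ∈ IM M, j ≠ j' → node M j ≠ node M j' := by
    rintro ⟨s0, s1, s2⟩ hj ⟨t0, t1, t2⟩ hj' hne h
    have hs : s0 + s1 + s2 = M := (Finset.mem_filter.mp hj).2
    have ht : t0 + t1 + t2 = M := (Finset.mem_filter.mp hj').2
    exact hne (key_inj M hM s0 s1 s2 t0 t1 t2 hs ht h)
  refine ⟨inj, Finset.card_image_of_injOn ?_⟩
  intro x hx y hy hxy
  by_contra hne
  exact inj x hx y hy hne hxy

end
end

section
/- There exists a set N ⊆ T of two-dimensional Lebesgue measure zero such that the map X is injective on T ∖ N, i.e. for all (a₁,a₂), (b₁,b₂) ∈ T ∖ N, X(a₁,a₂) = X(b₁,b₂) implies (a₁,a₂) = (b₁,b₂). -/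
open MeasureTheory Real

noncomputable section

/-- The fundamental domain `T` of the affine Weyl group of `A₂` in coroot coordinates. -/
def T : Set (ℝ × ℝ) :=
  {a | 0 ≤ 2 * a.1 - a.2 ∧ 0 ≤ 2 * a.2 - a.1 ∧ a.1 + a.2 ≤ 1}

/-- auxiliary exponential -/
def Efn (t : ℝ) : ℂ := Complex.exp ((2 * π * t : ℝ) * Complex.I)

lemma Efn_re (t : ℝ) : (Efn t).re = Real.cos (2 * π * t) := Complex.exp_ofReal_mul_I_re _

lemma Efn_im (t : ℝ) : (Efn t).im = Real.sin (2 * π * t) := Complex.exp_ofReal_mul_I_im _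

lemma Efn_mul (s t : ℝ) : Efn s * Efn t = Efn (s + t) := by
  rw [Efn, Efn, Efn, ← Complex.exp_add]
  congr 1
  push_cast
  ring

lemma Efn_zero : Efn 0 = 1 := by simp [Efn]

lemma Efn_conj (t : ℝ) : (starRingEnd ℂ) (Efn t) = Efn (-t) := by
  rw [Efn, Efn, ← Complex.exp_conj]
  congr 1
  rw [map_mul, Complex.conj_I, Complex.conj_ofReal]
  push_cast
  ring

lemma Efn_inj {x y : ℝ} (h : Efn x = Efn y) : ∃ n : ℤ, x = y + n := by
  rw [Efn, Efn, Complex.exp_eq_exp_iff_exists_int] at h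
  obtain ⟨n, hn⟩ := h
  refine ⟨n, ?_⟩
  have h2 := congrArg Complex.im hn
  simp [Complex.add_im, Complex.mul_im, Complex.mul_re, Complex.ofReal_re, Complex.ofReal_im,
    Complex.I_re, Complex.I_im, Complex.intCast_re, Complex.intCast_im] at h2
  have hπ : (0:ℝ) < π := Real.pi_pos
  have h3 : 2 * π * x = 2 * π * (y + n) := by ring_nf; ring_nf at h2; linarith
  have := mul_left_cancel₀ (by positivity : (2 * π : ℝ) ≠ 0) h3
  linarith

lemma pin3 {x y : ℝ} (h : ∃ n : ℤ, x = y + n) (hl : -2 < x - y) (hu : x - y < 2) :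
    x = y - 1 ∨ x = y ∨ x = y + 1 := by
  obtain ⟨n, hn⟩ := h
  have l1 : (-2 : ℤ) < n := by exact_mod_cast show (-2:ℝ) < (n:ℝ) by linarith
  have l2 : n < (2 : ℤ) := by exact_mod_cast show (n:ℝ) < (2:ℝ) by linarith
  interval_cases n <;> push_cast at hn
  · exact Or.inl (by linarith)
  · exact Or.inr (Or.inl (by linarith))
  · exact Or.inr (Or.inr (by linarith))

set_option maxHeartbeats 1000000 in
lemma endgame (a1 a2 b1 b2 : ℝ)
    (ha1 : 0 < 2 * a1 - a2) (ha2 : 0 < 2 * a2 - a1) (ha3 : a1 + a2 < 1)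
    (hb1 : 0 < 2 * b1 - b2) (hb2 : 0 < 2 * b2 - b1) (hb3 : b1 + b2 < 1)
    (d1 : (∃ n : ℤ, a1 = b1 + n) ∨ (∃ n : ℤ, a1 = -b2 + n) ∨ (∃ n : ℤ, a1 = (b2 - b1) + n))
    (d2 : (∃ n : ℤ, -a2 = b1 + n) ∨ (∃ n : ℤ, -a2 = -b2 + n) ∨ (∃ n : ℤ, -a2 = (b2 - b1) + n))
    (d3 : (∃ n : ℤ, a2 - a1 = b1 + n) ∨ (∃ n : ℤ, a2 - a1 = -b2 + n) ∨
      (∃ n : ℤ, a2 - a1 = (b2 - b1) + n)) :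
    ((a1, a2) : ℝ × ℝ) = (b1, b2) := by
  have pa1 : 0 < a1 := by linarith
  have pa2 : 0 < a2 := by linarith
  have pb1 : 0 < b1 := by linarith
  have pb2 : 0 < b2 := by linarith
  have c1 : a1 = b1 ∨ a1 = -b2 + 1 ∨ a1 = b2 - b1 ∨ a1 = b2 - b1 + 1 := by
    rcases d1 with h | h | h
    · rcases pin3 h (by linarith) (by linarith) with h' | h' | h'
      · exact absurd h' (by intro h''; linarith)
      · exact Or.inl h'
      · exact absurd h' (by intro h''; linarith)
    · rcases pin3 h (by linarith) (by linarith) with h' | h' | h'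
      · exact absurd h' (by intro h''; linarith)
      · exact absurd h' (by intro h''; linarith)
      · exact Or.inr (Or.inl h')
    · rcases pin3 h (by linarith) (by linarith) with h' | h' | h'
      · exact absurd h' (by intro h''; linarith)
      · exact Or.inr (Or.inr (Or.inl h'))
      · exact Or.inr (Or.inr (Or.inr h'))
  have c2 : -a2 = b1 - 1 ∨ -a2 = -b2 ∨ -a2 = b2 - b1 - 1 ∨ -a2 = b2 - b1 := by
    rcases d2 with h | h | h
    · rcases pin3 h (by linarith) (by linarith) with h' | h' | h'
      · exact Or.inl h'
      · exact absurd h' (by intro h''; linarith)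
      · exact absurd h' (by intro h''; linarith)
    · rcases pin3 h (by linarith) (by linarith) with h' | h' | h'
      · exact absurd h' (by intro h''; linarith)
      · exact Or.inr (Or.inl h')
      · exact absurd h' (by intro h''; linarith)
    · rcases pin3 h (by linarith) (by linarith) with h' | h' | h'
      · exact Or.inr (Or.inr (Or.inl h'))
      · exact Or.inr (Or.inr (Or.inr h'))
      · exact absurd h' (by intro h''; linarith)
  have c3 : a2 - a1 = b1 - 1 ∨ a2 - a1 = b1 ∨ a2 - a1 = -b2 ∨ a2 - a1 = -b2 + 1 ∨
      a2 - a1 = b2 - b1 - 1 ∨ a2 - a1 = b2 - b1 ∨ a2 - a1 = b2 - b1 + 1 := by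
    rcases d3 with h | h | h
    · rcases pin3 h (by linarith) (by linarith) with h' | h' | h'
      · exact Or.inl h'
      · exact Or.inr (Or.inl h')
      · exact absurd h' (by intro h''; linarith)
    · rcases pin3 h (by linarith) (by linarith) with h' | h' | h'
      · exact absurd h' (by intro h''; linarith)
      · exact Or.inr (Or.inr (Or.inl h'))
      · exact Or.inr (Or.inr (Or.inr (Or.inl h')))
    · rcases pin3 h (by linarith) (by linarith) with h' | h' | h'
      · exact Or.inr (Or.inr (Or.inr (Or.inr (Or.inl h'))))
      · exact Or.inr (Or.inr (Or.inr (Or.inr (Or.inr (Or.inl h')))))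
      · exact Or.inr (Or.inr (Or.inr (Or.inr (Or.inr (Or.inr h')))))
  rw [Prod.mk.injEq]
  rcases c1 with h1 | h1 | h1 | h1 <;> rcases c2 with h2 | h2 | h2 | h2 <;>
    rcases c3 with h3 | h3 | h3 | h3 | h3 | h3 | h3 <;>
    exact ⟨by linarith, by linarith⟩

set_option maxHeartbeats 1000000 in
lemma key (a1 a2 b1 b2 : ℝ)
    (ha1 : 0 < 2 * a1 - a2) (ha2 : 0 < 2 * a2 - a1) (ha3 : a1 + a2 < 1)
    (hb1 : 0 < 2 * b1 - b2) (hb2 : 0 < 2 * b2 - b1) (hb3 : b1 + b2 < 1)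
    (hX : Xmap (a1, a2) = Xmap (b1, b2)) : ((a1, a2) : ℝ × ℝ) = (b1, b2) := by
  have hX1 : X1 (a1, a2) = X1 (b1, b2) := congrArg Prod.fst hX
  have hX2 : X2 (a1, a2) = X2 (b1, b2) := congrArg Prod.snd hX
  set z1 := Efn a1 with hz1
  set z2 := Efn (-a2) with hz2
  set z3 := Efn (a2 - a1) with hz3
  set w1 := Efn b1 with hw1
  set w2 := Efn (-b2) with hw2
  set w3 := Efn (b2 - b1) with hw3
  have hsum : z1 + z2 + z3 = w1 + w2 + w3 := by
    apply Complex.ext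
    · simp only [Complex.add_re, hz1, hz2, hz3, hw1, hw2, hw3, Efn_re]
      simp only [X1] at hX1
      rw [show 2*π*(-a2) = -(2*π*a2) by ring, show 2*π*(a2-a1) = -(2*π*(a1-a2)) by ring,
        show 2*π*(-b2) = -(2*π*b2) by ring, show 2*π*(b2-b1) = -(2*π*(b1-b2)) by ring,
        Real.cos_neg, Real.cos_neg, Real.cos_neg, Real.cos_neg]
      linarith
    · simp only [Complex.add_im, hz1, hz2, hz3, hw1, hw2, hw3, Efn_im]
      simp only [X2] at hX2
      rw [show 2*π*(-a2) = -(2*π*a2) by ring, show 2*π*(a2-a1) = -(2*π*(a1-a2)) by ring,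
        show 2*π*(-b2) = -(2*π*b2) by ring, show 2*π*(b2-b1) = -(2*π*(b1-b2)) by ring,
        Real.sin_neg, Real.sin_neg, Real.sin_neg, Real.sin_neg]
      linarith
  have he3z : z1 * z2 * z3 = 1 := by
    rw [hz1, hz2, hz3, Efn_mul, Efn_mul, show a1 + -a2 + (a2 - a1) = 0 by ring, Efn_zero]
  have he3w : w1 * w2 * w3 = 1 := by
    rw [hw1, hw2, hw3, Efn_mul, Efn_mul, show b1 + -b2 + (b2 - b1) = 0 by ring, Efn_zero]
  have he2z : z1 * z2 + z1 * z3 + z2 * z3 = (starRingEnd ℂ) (z1 + z2 + z3) := by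
    rw [hz1, hz2, hz3, Efn_mul, Efn_mul, Efn_mul, map_add, map_add, Efn_conj, Efn_conj, Efn_conj,
      show a1 + -a2 = -(a2 - a1) by ring, show a1 + (a2 - a1) = -(-a2) by ring,
      show -a2 + (a2 - a1) = -a1 by ring]
    ring
  have he2w : w1 * w2 + w1 * w3 + w2 * w3 = (starRingEnd ℂ) (w1 + w2 + w3) := by
    rw [hw1, hw2, hw3, Efn_mul, Efn_mul, Efn_mul, map_add, map_add, Efn_conj, Efn_conj, Efn_conj,
      show b1 + -b2 = -(b2 - b1) by ring, show b1 + (b2 - b1) = -(-b2) by ring,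
      show -b2 + (b2 - b1) = -b1 by ring]
    ring
  have cubic : ∀ u : ℂ, (u - z1) * (u - z2) * (u - z3) = (u - w1) * (u - w2) * (u - w3) := by
    intro u
    have hz : (u - z1) * (u - z2) * (u - z3)
        = u^3 - (z1+z2+z3)*u^2 + (z1*z2+z1*z3+z2*z3)*u - z1*z2*z3 := by ring
    have hw : (u - w1) * (u - w2) * (u - w3)
        = u^3 - (w1+w2+w3)*u^2 + (w1*w2+w1*w3+w2*w3)*u - w1*w2*w3 := by ring
    rw [hz, hw, he3z, he3w, he2z, he2w, hsum]
  have root : ∀ u : ℂ, (u - z1) * (u - z2) * (u - z3) = 0 → u = w1 ∨ u = w2 ∨ u = w3 := by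
    intro u hu
    rw [cubic u] at hu
    simpa [mul_eq_zero, sub_eq_zero, or_assoc] using hu
  have r1 : z1 = w1 ∨ z1 = w2 ∨ z1 = w3 := root z1 (by ring)
  have r2 : z2 = w1 ∨ z2 = w2 ∨ z2 = w3 := root z2 (by ring)
  have r3 : z3 = w1 ∨ z3 = w2 ∨ z3 = w3 := root z3 (by ring)
  have c1 : (∃ n : ℤ, a1 = b1 + n) ∨ (∃ n : ℤ, a1 = -b2 + n) ∨ (∃ n : ℤ, a1 = (b2 - b1) + n) := by
    rcases r1 with h | h | h
    · exact Or.inl (Efn_inj h)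
    · exact Or.inr (Or.inl (Efn_inj h))
    · exact Or.inr (Or.inr (Efn_inj h))
  have c2 : (∃ n : ℤ, -a2 = b1 + n) ∨ (∃ n : ℤ, -a2 = -b2 + n) ∨ (∃ n : ℤ, -a2 = (b2 - b1) + n) := by
    rcases r2 with h | h | h
    · exact Or.inl (Efn_inj h)
    · exact Or.inr (Or.inl (Efn_inj h))
    · exact Or.inr (Or.inr (Efn_inj h))
  have c3 : (∃ n : ℤ, a2 - a1 = b1 + n) ∨ (∃ n : ℤ, a2 - a1 = -b2 + n) ∨
      (∃ n : ℤ, a2 - a1 = (b2 - b1) + n) := by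
    rcases r3 with h | h | h
    · exact Or.inl (Efn_inj h)
    · exact Or.inr (Or.inl (Efn_inj h))
    · exact Or.inr (Or.inr (Efn_inj h))
  exact endgame a1 a2 b1 b2 ha1 ha2 ha3 hb1 hb2 hb3 c1 c2 c3

lemma line_null (f : (ℝ × ℝ) →ₗ[ℝ] ℝ) (v : ℝ × ℝ) (hv : f v ≠ 0) (c : ℝ) :
    volume {x : ℝ × ℝ | f x = c} = 0 := by
  have hker : LinearMap.ker f ≠ ⊤ := by
    intro h
    rw [LinearMap.ker_eq_top] at h
    exact hv (by rw [h]; rfl)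
  have h0 : volume (LinearMap.ker f : Set (ℝ × ℝ)) = 0 :=
    Measure.addHaar_submodule volume _ hker
  set p : ℝ × ℝ := (c / f v) • v with hp
  have hfp : f p = c := by
    rw [hp, _root_.map_smul, smul_eq_mul, div_mul_cancel₀ _ hv]
  have hset : {x : ℝ × ℝ | f x = c} = (· + (-p)) ⁻¹' (LinearMap.ker f : Set (ℝ × ℝ)) := by
    ext x
    simp only [Set.mem_setOf_eq, Set.mem_preimage, SetLike.mem_coe, LinearMap.mem_ker, map_add,
      map_neg, hfp]
    constructor
    · intro h; rw [h]; ring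
    · intro h; linarith
  rw [hset, measure_preimage_add_right]
  exact h0

/-- The `X`-transform of `A₂` is injective on the fundamental domain `T`
up to a set of Lebesgue measure zero. -/
theorem Xmap_ae_injective :
    ∃ N : Set (ℝ × ℝ), N ⊆ T ∧ volume N = 0 ∧
      ∀ a ∈ T \ N, ∀ b ∈ T \ N, Xmap a = Xmap b → a = b := by
  refine ⟨{x ∈ T | 2 * x.1 - x.2 = 0 ∨ 2 * x.2 - x.1 = 0 ∨ x.1 + x.2 = 1},
    Set.sep_subset _ _, ?_, ?_⟩
  · have hsub : {x : ℝ × ℝ | x ∈ T ∧ (2 * x.1 - x.2 = 0 ∨ 2 * x.2 - x.1 = 0 ∨ x.1 + x.2 = 1)} ⊆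
        {x : ℝ × ℝ | ((2 : ℝ) • LinearMap.fst ℝ ℝ ℝ - LinearMap.snd ℝ ℝ ℝ) x = 0} ∪
        ({x : ℝ × ℝ | ((2 : ℝ) • LinearMap.snd ℝ ℝ ℝ - LinearMap.fst ℝ ℝ ℝ) x = 0} ∪
         {x : ℝ × ℝ | (LinearMap.fst ℝ ℝ ℝ + LinearMap.snd ℝ ℝ ℝ) x = 1}) := by
      rintro x ⟨-, h | h | h⟩
      · exact Or.inl (by simpa using h)
      · exact Or.inr (Or.inl (by simpa using h))
      · exact Or.inr (Or.inr (by simpa using h))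
    refine measure_mono_null hsub ?_
    refine measure_union_null ?_ (measure_union_null ?_ ?_)
    · exact line_null _ ((1 : ℝ), (0 : ℝ)) (by norm_num) 0
    · exact line_null _ ((0 : ℝ), (1 : ℝ)) (by norm_num) 0
    · exact line_null _ ((1 : ℝ), (0 : ℝ)) (by norm_num) 1
  · rintro ⟨a1, a2⟩ ⟨⟨ha1, ha2, ha3⟩, hNa⟩ ⟨b1, b2⟩ ⟨⟨hb1, hb2, hb3⟩, hNb⟩ hX
    simp only [Set.mem_setOf_eq, not_and, not_or] at hNa hNb
    obtain ⟨na1, na2, na3⟩ := hNa ⟨ha1, ha2, ha3⟩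
    obtain ⟨nb1, nb2, nb3⟩ := hNb ⟨hb1, hb2, hb3⟩
    exact key a1 a2 b1 b2 (lt_of_le_of_ne ha1 (Ne.symm na1)) (lt_of_le_of_ne ha2 (Ne.symm na2))
      (lt_of_le_of_ne ha3 na3) (lt_of_le_of_ne hb1 (Ne.symm nb1)) (lt_of_le_of_ne hb2 (Ne.symm nb2))
      (lt_of_le_of_ne hb3 nb3) hX

end
end

section
/- The image of the fundamental domain T under the map X equals Ω, i.e. X(T) = {(y₁,y₂) ∈ ℝ² : −(y₁² + y₂² + 9)² + 8(y₁³ − 3y₁y₂²) + 108 ≥ 0}. -/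
open Real

noncomputable section

/-- Key factorization identity for the forward inclusion. -/
lemma key_fwd (A B : ℝ) :
    -((cos A + cos B + cos (A - B)) ^ 2 + (sin A - sin B - sin (A - B)) ^ 2 + 9) ^ 2 +
        8 * ((cos A + cos B + cos (A - B)) ^ 3 -
          3 * (cos A + cos B + cos (A - B)) * (sin A - sin B - sin (A - B)) ^ 2) + 108 =
      8 * (1 - cos (A + B)) * (1 - cos (2 * A - B)) * (1 - cos (2 * B - A)) := by
  have h1 : sin A ^ 2 + cos A ^ 2 = 1 := sin_sq_add_cos_sq A
  have h2 : sin B ^ 2 + cos B ^ 2 = 1 := sin_sq_add_cos_sq B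
  rw [show (2 * A - B) = A + (A - B) by ring, show (2 * B - A) = B - (A - B) by ring]
  simp only [cos_add, cos_sub, sin_sub]
  linear_combination
    ((-19) + 8*(cos B) + 22*(cos B)^2 + (-16)*(cos B)^3 + (-3)*(cos B)^4 + 22*(sin B)^2 + 16*(sin B)^2*(cos B) + (-6)*(sin B)^2*(cos B)^2 + (-3)*(sin B)^4 + (-24)*(cos A) + 20*(cos A)*(cos B) + 36*(cos A)*(cos B)^2 + (-12)*(cos A)*(cos B)^3 + (-4)*(cos A)*(cos B)^4 + 12*(cos A)*(sin B)^2 + (-12)*(cos A)*(sin B)^2*(cos B) + 4*(cos A)*(sin B)^4 + (-1)*(cos A)^2 + (-4)*(cos A)^2*(cos B) + 10*(cos A)^2*(cos B)^2 + (-4)*(cos A)^2*(cos B)^3 + (-9)*(cos A)^2*(cos B)^4 + (-18)*(cos A)^2*(sin B)^2 + (-4)*(cos A)^2*(sin B)^2*(cos B) + (-10)*(cos A)^2*(sin B)^2*(cos B)^2 + 15*(cos A)^2*(sin B)^4 + (-20)*(sin A)*(sin B) + 24*(sin A)*(sin B)*(cos B) + 12*(sin A)*(sin B)*(cos B)^2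 + (-8)*(sin A)*(sin B)*(cos B)^3 + 12*(sin A)*(sin B)^3 + (-8)*(sin A)*(sin B)^3*(cos B) + (-8)*(sin A)*(cos A)*(sin B) + 16*(sin A)*(cos A)*(sin B)*(cos B) + (-8)*(sin A)*(cos A)*(sin B)*(cos B)^2 + (-8)*(sin A)*(cos A)*(sin B)*(cos B)^3 + (-8)*(sin A)*(cos A)*(sin B)^3 + (-40)*(sin A)*(cos A)*(sin B)^3*(cos B) + (-1)*(sin A)^2 + 4*(sin A)^2*(cos B) + (-6)*(sin A)^2*(cos B)^2 + 4*(sin A)^2*(cos B)^3 + (-1)*(sin A)^2*(cos B)^4 + (-2)*(sin A)^2*(sin B)^2 + 4*(sin A)^2*(sin B)^2*(cos B) + 14*(sin A)^2*(sin B)^2*(cos B)^2 + (-1)*(sin A)^2*(sin B)^4) * h1 +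
    ((-8)*(cos B) + (-4)*(cos B)^2 + (-4)*(sin B)^2 + 24*(cos A) + 8*(cos A)*(cos B) + (-8)*(cos A)*(cos B)^2 + 8*(cos A)*(sin B)^2 + 16*(cos A)^2*(cos B) + (-12)*(cos A)^2*(cos B)^2 + 12*(cos A)^2*(sin B)^2 + (-32)*(cos A)^3 + 16*(cos A)^4*(cos B)^2 + (-16)*(cos A)^4*(sin B)^2 + (-8)*(sin A)*(sin B) + (-16)*(sin A)*(sin B)*(cos B) + 16*(sin A)*(cos A)*(sin B) + (-24)*(sin A)*(cos A)*(sin B)*(cos B) + 32*(sin A)*(cos A)^3*(sin B)*(cos B)) * h2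

/-- Key identity for the backward inclusion. -/
lemma key_bwd (m s c : ℝ) (h : s ^ 2 + c ^ 2 = 1) :
    -((m * c + (2 * c ^ 2 - 1)) ^ 2 + (2 * s * c - m * s) ^ 2 + 9) ^ 2 +
        8 * ((m * c + (2 * c ^ 2 - 1)) ^ 3 -
          3 * (m * c + (2 * c ^ 2 - 1)) * (2 * s * c - m * s) ^ 2) + 108 =
      (4 - m ^ 2) * (2 * (4 * c ^ 3 - 3 * c) - m) ^ 2 := by
  linear_combination
    (16*c^2 + (-176)*c^4 + (-16)*c^6 + (-16)*s^2*c^4 + (-16)*m*c + 112*m*c^3 + (-32)*m*c^5 + 32*m*s^2*c^3 + 4*m^2 + 16*m^2*c^2 + 40*m^2*c^4 + (-24)*m^2*s^2*c^2 + (-12)*m^3*c + (-8)*m^3*c^3 + 8*m^3*s^2*c + (-1)*m^4 + (-1)*m^4*c^2 + (-1)*m^4*s^2) * h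

/-- Existence of a suitable root via the intermediate value theorem. -/
lemma exists_root (y1 y2 : ℝ) : ∃ t : ℝ, y1 * sin t + y2 * cos t = sin (3 * t) := by
  have key : ∀ u v : ℝ, sin (3 * u) - y1 * sin u - y2 * cos u ≤ 0 →
      0 ≤ sin (3 * v) - y1 * sin v - y2 * cos v →
      ∃ t : ℝ, y1 * sin t + y2 * cos t = sin (3 * t) := by
    intro u v h1 h2
    have hc : Continuous fun t : ℝ => sin (3 * t) - y1 * sin t - y2 * cos t := by fun_prop
    rcases le_total u v with h | h
    · obtain ⟨t, _, ht⟩ := intermediate_value_Icc h hc.continuousOn ⟨h1, h2⟩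
      refine ⟨t, ?_⟩
      have ht' : sin (3 * t) - y1 * sin t - y2 * cos t = 0 := ht
      linarith
    · obtain ⟨t, _, ht⟩ := intermediate_value_Icc' h hc.continuousOn ⟨h1, h2⟩
      refine ⟨t, ?_⟩
      have ht' : sin (3 * t) - y1 * sin t - y2 * cos t = 0 := ht
      linarith
  have hsum : (sin (3 * 0) - y1 * sin 0 - y2 * cos 0) +
      (sin (3 * (2 * π / 3)) - y1 * sin (2 * π / 3) - y2 * cos (2 * π / 3)) +
      (sin (3 * (4 * π / 3)) - y1 * sin (4 * π / 3) - y2 * cos (4 * π / 3)) = 0 := by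
    rw [show (3 : ℝ) * (2 * π / 3) = 2 * π by ring,
        show (3 : ℝ) * (4 * π / 3) = 2 * π + 2 * π by ring,
        show (2 * π / 3 : ℝ) = π - π / 3 by ring,
        show (4 * π / 3 : ℝ) = π + π / 3 by ring]
    simp only [sin_add, cos_add, sin_pi_sub, cos_pi_sub, sin_two_pi, cos_two_pi, sin_pi,
      cos_pi, mul_zero, sin_zero, cos_zero, cos_pi_div_three]
    ring
  set E1 := sin (3 * 0) - y1 * sin 0 - y2 * cos 0 with hE1
  set E2 := sin (3 * (2 * π / 3)) - y1 * sin (2 * π / 3) - y2 * cos (2 * π / 3) with hE2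
  set E3 := sin (3 * (4 * π / 3)) - y1 * sin (4 * π / 3) - y2 * cos (4 * π / 3) with hE3
  rcases le_total E1 0 with h | h
  · rcases le_total 0 E2 with h' | h'
    · exact key 0 (2 * π / 3) h h'
    · exact key 0 (4 * π / 3) h (by rw [← hE3]; linarith)
  · rcases le_total E2 0 with h' | h'
    · exact key (2 * π / 3) 0 h' h
    · exact key (4 * π / 3) 0 (by rw [← hE3]; linarith) h

/-- Sorting three reals in `[0, 2π)` while keeping trigonometric sums. -/
lemma three_sort (a b c : ℝ) (h0a : 0 ≤ a) (h0b : 0 ≤ b) (h0c : 0 ≤ c)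
    (hua : a < 2 * π) (hub : b < 2 * π) (huc : c < 2 * π) :
    ∃ p q r : ℝ, 0 ≤ r ∧ p < 2 * π ∧ q ≤ p ∧ r ≤ q ∧ p + q + r = a + b + c ∧
      cos p + cos q + cos r = cos a + cos b + cos c ∧
      sin p + sin q + sin r = sin a + sin b + sin c := by
  rcases le_total a b with h1 | h1
  · rcases le_total b c with h2 | h2
    · exact ⟨c, b, a, h0a, huc, h2, h1, by ring, by ring, by ring⟩
    · rcases le_total a c with h3 | h3
      · exact ⟨b, c, a, h0a, hub, h2, h3, by ring, by ring, by ring⟩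
      · exact ⟨b, a, c, h0c, hub, h1, h3, by ring, by ring, by ring⟩
  · rcases le_total b c with h2 | h2
    · rcases le_total a c with h3 | h3
      · exact ⟨c, a, b, h0b, huc, h3, h1, by ring, by ring, by ring⟩
      · exact ⟨a, c, b, h0b, hua, h3, h2, by ring, by ring, by ring⟩
    · exact ⟨a, b, c, h0c, hua, h1, h2, by ring, by ring, by ring⟩

/-- From a sorted triple in `[0,2π)` summing to a multiple of `2π`, build a triple summing
to `0` with spread at most `2π`. -/
lemma sorted_case (C1 C2 C3 : ℝ) (m : ℤ) (h12 : C2 ≤ C1) (h23 : C3 ≤ C2)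
    (h0 : 0 ≤ C3) (hub : C1 < 2 * π) (hm : C1 + C2 + C3 = m * (2 * π)) :
    ∃ B1 B2 B3 : ℝ, B1 + B2 + B3 = 0 ∧ B2 ≤ B1 ∧ B3 ≤ B2 ∧ B1 - B3 ≤ 2 * π ∧
      cos B1 + cos B2 + cos B3 = cos C1 + cos C2 + cos C3 ∧
      sin B1 + sin B2 + sin B3 = sin C1 + sin C2 + sin C3 := by
  have hπ : (0 : ℝ) < π := pi_pos
  have h0b : 0 ≤ C2 := le_trans h0 h23
  have h0a : 0 ≤ C1 := le_trans h0b h12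
  have hub2 : C2 < 2 * π := lt_of_le_of_lt h12 hub
  have hub3 : C3 < 2 * π := lt_of_le_of_lt h23 hub2
  have hm0 : 0 ≤ m := by
    have hr : 0 ≤ (m : ℝ) := by nlinarith
    exact_mod_cast hr
  have hm3 : m ≤ 2 := by
    by_contra hcon
    push_neg at hcon
    have hr : (3 : ℝ) ≤ (m : ℝ) := by exact_mod_cast hcon
    nlinarith
  interval_cases m
  · have hm' : C1 + C2 + C3 = 0 := by push_cast at hm; linarith
    exact ⟨C1, C2, C3, hm', h12, h23, by linarith, by ring, by ring⟩
  · have hm' : C1 + C2 + C3 = 2 * π := by push_cast at hm; linarith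
    refine ⟨C2, C3, C1 - 2 * π, by linarith, h23, by linarith, by linarith, ?_, ?_⟩
    · rw [cos_sub_two_pi]; ring
    · rw [sin_sub_two_pi]; ring
  · have hm' : C1 + C2 + C3 = 4 * π := by push_cast at hm; linarith
    refine ⟨C3, C1 - 2 * π, C2 - 2 * π, by linarith, by linarith, by linarith, by linarith,
      ?_, ?_⟩
    · rw [cos_sub_two_pi, cos_sub_two_pi]; ring
    · rw [sin_sub_two_pi, sin_sub_two_pi]; ring

/-- Reduce an angle to `[0, 2π)` keeping its sine and cosine. -/
lemma reduce_angle (x : ℝ) : ∃ x' : ℝ, ∃ n : ℤ, x' = x - n * (2 * π) ∧ 0 ≤ x' ∧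
    x' < 2 * π ∧ cos x' = cos x ∧ sin x' = sin x := by
  have hπ : (0 : ℝ) < 2 * π := by positivity
  refine ⟨x - ⌊x / (2 * π)⌋ * (2 * π), ⌊x / (2 * π)⌋, rfl, ?_, ?_,
    cos_sub_int_mul_two_pi x _, Real.sin_periodic.sub_int_mul_eq _⟩
  · have h := Int.floor_le (x / (2 * π))
    have h' := (le_div_iff₀ hπ).mp h
    linarith
  · have h := Int.lt_floor_add_one (x / (2 * π))
    have h' := (div_lt_iff₀ hπ).mp h
    push_cast at h' ⊢
    linarith

/-- Normal form: given three angles summing to `0`, find a sorted triple summing to zero with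
spread `≤ 2π` and the same cosine and sine sums. -/
lemma exists_sorted (α β γ : ℝ) (h : α + β + γ = 0) :
    ∃ B1 B2 B3 : ℝ, B1 + B2 + B3 = 0 ∧ B2 ≤ B1 ∧ B3 ≤ B2 ∧ B1 - B3 ≤ 2 * π ∧
      cos B1 + cos B2 + cos B3 = cos α + cos β + cos γ ∧
      sin B1 + sin B2 + sin B3 = sin α + sin β + sin γ := by
  obtain ⟨a, n1, ha, h0a, hua, hca, hsa⟩ := reduce_angle α
  obtain ⟨b, n2, hb, h0b, hub, hcb, hsb⟩ := reduce_angle β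
  obtain ⟨c, n3, hc, h0c, huc, hcc, hsc⟩ := reduce_angle γ
  obtain ⟨p, q, r, h0r, hup, hqp, hrq, hsum3, hcos3, hsin3⟩ :=
    three_sort a b c h0a h0b h0c hua hub huc
  have hm : p + q + r = (-(n1 + n2 + n3) : ℤ) * (2 * π) := by
    rw [hsum3, ha, hb, hc]
    push_cast
    linarith
  obtain ⟨B1, B2, B3, hs, h12, h23, hsp, hcosB, hsinB⟩ :=
    sorted_case p q r (-(n1 + n2 + n3)) hqp hrq h0r hup hm
  exact ⟨B1, B2, B3, hs, h12, h23, hsp,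
    by rw [hcosB, hcos3, hca, hcb, hcc],
    by rw [hsinB, hsin3, hsa, hsb, hsc]⟩

/-- Realize prescribed cosine and sine sums by a point of the fundamental domain. -/
lemma mem_image_of_angles (α β γ : ℝ) (h : α + β + γ = 0) :
    ∃ a ∈ T, X1 a = cos α + cos β + cos γ ∧ X2 a = sin α + sin β + sin γ := by
  obtain ⟨B1, B2, B3, hsum, h12, h23, hsp, hcosB, hsinB⟩ := exists_sorted α β γ h
  have hπ : (0 : ℝ) < 2 * π := by positivity
  have e1 : 2 * π * (B1 / (2 * π)) = B1 := by field_simp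
  have e2 : 2 * π * (-B3 / (2 * π)) = -B3 := by field_simp
  have e3 : 2 * π * (B1 / (2 * π) - -B3 / (2 * π)) = -B2 := by
    have h4 : B1 / (2 * π) - -B3 / (2 * π) = (B1 + B3) / (2 * π) := by ring
    rw [h4, show B1 + B3 = -B2 by linarith]
    field_simp
  refine ⟨(B1 / (2 * π), -B3 / (2 * π)), ?_, ?_, ?_⟩
  · show 0 ≤ 2 * (B1 / (2 * π)) - -B3 / (2 * π) ∧
      0 ≤ 2 * (-B3 / (2 * π)) - B1 / (2 * π) ∧ B1 / (2 * π) + -B3 / (2 * π) ≤ 1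
    refine ⟨?_, ?_, ?_⟩
    · rw [show 2 * (B1 / (2 * π)) - -B3 / (2 * π) = (2 * B1 + B3) / (2 * π) by ring]
      exact div_nonneg (by linarith) hπ.le
    · rw [show 2 * (-B3 / (2 * π)) - B1 / (2 * π) = (-(2 * B3) - B1) / (2 * π) by ring]
      exact div_nonneg (by linarith) hπ.le
    · rw [show B1 / (2 * π) + -B3 / (2 * π) = (B1 - B3) / (2 * π) by ring, div_le_one hπ]
      linarith
  · show Real.cos (2 * π * (B1 / (2 * π))) + Real.cos (2 * π * (-B3 / (2 * π))) +
        Real.cos (2 * π * (B1 / (2 * π) - -B3 / (2 * π))) = cos α + cos β + cos γ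
    rw [e1, e2, e3, cos_neg, cos_neg]
    linarith [hcosB]
  · show Real.sin (2 * π * (B1 / (2 * π))) - Real.sin (2 * π * (-B3 / (2 * π))) -
        Real.sin (2 * π * (B1 / (2 * π) - -B3 / (2 * π))) = sin α + sin β + sin γ
    rw [e1, e2, e3, sin_neg, sin_neg]
    linarith [hsinB]

/-- The image of the fundamental domain `T` of `A₂` under the
`X`-transform is the region `Ω` bounded by the zero locus of `K`. -/
theorem Xmap_image_eq_Omega :
    Xmap '' T =
      {y : ℝ × ℝ |
        0 ≤ -(y.1 ^ 2 + y.2 ^ 2 + 9) ^ 2 + 8 * (y.1 ^ 3 - 3 * y.1 * y.2 ^ 2) + 108} := by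
  apply Set.Subset.antisymm
  · rintro y ⟨a, -, rfl⟩
    show (0:ℝ) ≤ -((X1 a) ^ 2 + (X2 a) ^ 2 + 9) ^ 2 +
      8 * ((X1 a) ^ 3 - 3 * (X1 a) * (X2 a) ^ 2) + 108
    unfold X1 X2
    rw [show 2 * π * (a.1 - a.2) = 2 * π * a.1 - 2 * π * a.2 by ring]
    rw [key_fwd (2 * π * a.1) (2 * π * a.2)]
    have c1 := cos_le_one (2 * π * a.1 + 2 * π * a.2)
    have c2 := cos_le_one (2 * (2 * π * a.1) - 2 * π * a.2)
    have c3 := cos_le_one (2 * (2 * π * a.2) - 2 * π * a.1)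
    have h8 : (0:ℝ) ≤ 8 * (1 - cos (2 * π * a.1 + 2 * π * a.2)) := by linarith
    exact mul_nonneg (mul_nonneg h8 (by linarith)) (by linarith)
  · intro y hy
    simp only [Set.mem_setOf_eq] at hy
    obtain ⟨t, hG⟩ := exists_root y.1 y.2
    rw [sin_three_mul] at hG
    have hpy : sin t ^ 2 + cos t ^ 2 = 1 := sin_sq_add_cos_sq t
    set μ := y.1 * cos t - y.2 * sin t - (4 * cos t ^ 3 - 3 * cos t) with hμ
    have hy1 : y.1 = μ * cos t + (2 * cos t ^ 2 - 1) := by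
      rw [hμ]
      linear_combination (sin t) * hG +
        ((-1) + 4*(cos t)^2 + (-4)*(sin t)^2 + (-1)*y.1) * hpy
    have hy2 : y.2 = 2 * sin t * cos t - μ * sin t := by
      rw [hμ]
      linear_combination (cos t) * hG + ((-4)*(sin t)*(cos t) + (-1)*y.2) * hpy
    have hK := key_bwd μ (sin t) (cos t) hpy
    rw [← hy1, ← hy2] at hK
    rw [hK] at hy
    have hc3 : (4 * cos t ^ 3 - 3 * cos t) ^ 2 ≤ 1 := by
      rw [← cos_three_mul]
      nlinarith [neg_one_le_cos (3 * t), cos_le_one (3 * t)]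
    have hμ4 : μ ^ 2 ≤ 4 := by
      rcases le_or_gt (μ ^ 2) 4 with h | h
      · exact h
      · exfalso
        have hDle : (2 * (4 * cos t ^ 3 - 3 * cos t) - μ) ^ 2 ≤ 0 := by nlinarith [hy]
        have hD00 : (2 * (4 * cos t ^ 3 - 3 * cos t) - μ) ^ 2 = 0 :=
          le_antisymm hDle (sq_nonneg _)
        have hD0 : 2 * (4 * cos t ^ 3 - 3 * cos t) - μ = 0 := sq_eq_zero_iff.mp hD00
        have hμeq : μ = 2 * (4 * cos t ^ 3 - 3 * cos t) := by linarith
        have h2 : μ ^ 2 = 4 * (4 * cos t ^ 3 - 3 * cos t) ^ 2 := by rw [hμeq]; ring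
        linarith
    set ψ := arccos (μ / 2) with hψdef
    have hcψ : cos ψ = μ / 2 :=
      cos_arccos (by nlinarith [sq_nonneg (μ + 2)]) (by nlinarith [sq_nonneg (μ - 2)])
    obtain ⟨a, haT, hX1, hX2⟩ := mem_image_of_angles (ψ - t) (-ψ - t) (2 * t) (by ring)
    have e1 : cos (ψ - t) + cos (-ψ - t) + cos (2 * t) = y.1 := by
      rw [show (-ψ - t : ℝ) = -(ψ + t) by ring, cos_neg, cos_add, cos_sub, cos_two_mul, hcψ]
      linear_combination (-1 : ℝ) * hy1
    have e2 : sin (ψ - t) + sin (-ψ - t) + sin (2 * t) = y.2 := by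
      rw [show (-ψ - t : ℝ) = -(ψ + t) by ring, sin_neg, sin_add, sin_sub, sin_two_mul, hcψ]
      linear_combination (-1 : ℝ) * hy2
    refine ⟨a, haT, ?_⟩
    rw [Prod.ext_iff]
    constructor
    · show X1 a = y.1
      rw [hX1]; exact e1
    · show X2 a = y.2
      rw [hX2]; exact e2

end
end
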